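/- Suppose p : ℝ → ℝ² is twice differentiable, p_o ∈ ℝ² fixed, h(t) = (1/2)(‖p_o − p(t)‖² − Δ²) with Δ > 0, and ψ¹ = h' + α₀h with α₀ > 0. If h(0) ≥ 0, ψ¹(0) ≥ 0, and (ψ¹)' + α₁ψ¹ ≥ 0 on [0, ∞) for some α₁ > 0, then ‖p(t) − p_o‖ ≥ Δ for all t ≥ 0, i.e., the vehicle never collides with the obstacle's safety region. -/

import Mathlib

open Real

private lemma gronwall_nonneg (f : ℝ → ℝ) (α : ℝ) (hf : Differentiable ℝ f)
    (h0 : 0 ≤ f 0) (hi : ∀ t ≥ (0 : ℝ), 0 ≤ deriv f t + α * f t) :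
    ∀ t ≥ (0 : ℝ), 0 ≤ f t := by
  intro t ht
  set g : ℝ → ℝ := fun t => Real.exp (α * t) * f t with hg
  have hgd : ∀ x, HasDerivAt g (Real.exp (α * x) * (deriv f x + α * f x)) x := by
    intro x
    have h1 : HasDerivAt (fun t => Real.exp (α * t)) (Real.exp (α * x) * α) x := by
      simpa [Function.comp_def] using (Real.hasDerivAt_exp (α * x)).comp x ((hasDerivAt_id x).const_mul α)
    have h2 : HasDerivAt g (Real.exp (α * x) * α * f x + Real.exp (α * x) * deriv f x) x :=
      h1.mul (hf x).hasDerivAt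
    convert h2 using 1
    ring
  have hgdiff : Differentiable ℝ g := fun x => (hgd x).differentiableAt
  have mono : MonotoneOn g (Set.Ici (0 : ℝ)) := by
    apply monotoneOn_of_deriv_nonneg (convex_Ici 0) hgdiff.continuous.continuousOn
      (hgdiff.differentiableOn)
    intro x hx
    rw [interior_Ici] at hx
    rw [(hgd x).deriv]
    exact mul_nonneg (Real.exp_pos _).le (hi x (le_of_lt hx))
  have h01 : g 0 ≤ g t := mono Set.self_mem_Ici ht ht
  have hg0 : g 0 = f 0 := by simp [hg]
  have : 0 ≤ Real.exp (α * t) * f t := by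
    have := le_trans h0 (hg0 ▸ h01)
    simpa [hg] using this
  exact nonneg_of_mul_nonneg_right this (Real.exp_pos _)

/-- Obstacle avoidance via a second-order HOCBF: the vehicle never enters the
obstacle's safety region of radius `Δ`. -/
theorem obstacle_avoidance (p : ℝ → EuclideanSpace ℝ (Fin 2))
    (po : EuclideanSpace ℝ (Fin 2)) (Δ α0 α1 : ℝ)
    (hΔ : 0 < Δ) (hα0 : 0 < α0) (hα1 : 0 < α1)
    (hp : Differentiable ℝ p) (hp2 : Differentiable ℝ (deriv p))
    (h : ℝ → ℝ) (hh : h = fun t => (1 / 2 : ℝ) * (‖po - p t‖ ^ 2 - Δ ^ 2))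
    (ψ1 : ℝ → ℝ) (hψ1 : ψ1 = fun t => deriv h t + α0 * h t)
    (h0 : 0 ≤ h 0) (h1 : 0 ≤ ψ1 0)
    (hineq : ∀ t ≥ (0 : ℝ), deriv ψ1 t + α1 * ψ1 t ≥ 0) :
    ∀ t ≥ (0 : ℝ), Δ ≤ ‖p t - po‖ := by
  -- rewrite h using inner products
  have hh' : h = fun t => (1 / 2 : ℝ) * (inner ℝ (po - p t) (po - p t) - Δ ^ 2) := by
    rw [hh]
    funext t
    rw [real_inner_self_eq_norm_sq]
  have hq : ∀ x, HasDerivAt (fun t => po - p t) (-(deriv p x)) x :=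
    fun x => (hp x).hasDerivAt.const_sub po
  have hhd : ∀ x, HasDerivAt h (-(inner ℝ (po - p x) (deriv p x) : ℝ)) x := by
    intro x
    rw [hh']
    have := ((hq x).inner ℝ (hq x)).const_mul (1 / 2 : ℝ)
    have h2 : HasDerivAt (fun t => (1 / 2 : ℝ) * ((inner ℝ (po - p t) (po - p t) : ℝ) - Δ ^ 2))
        ((1 / 2 : ℝ) * (((inner ℝ (po - p x) (-(deriv p x)) : ℝ)
          + (inner ℝ (-(deriv p x)) (po - p x) : ℝ)))) x :=
      (((hq x).inner ℝ (hq x)).sub_const (Δ ^ 2)).const_mul (1 / 2 : ℝ)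
    convert h2 using 1
    simp [real_inner_comm (po - p x) (deriv p x), inner_neg_left, inner_neg_right]
    ring
  have hderivh : deriv h = fun x => -(inner ℝ (po - p x) (deriv p x) : ℝ) :=
    funext fun x => (hhd x).deriv
  have hhdiff : Differentiable ℝ h := fun x => (hhd x).differentiableAt
  have hψdiff : Differentiable ℝ ψ1 := by
    rw [hψ1, hderivh]
    exact (((hp.const_sub po).inner ℝ hp2).neg).add (hhdiff.const_mul α0)
  have hψpos : ∀ t ≥ (0 : ℝ), 0 ≤ ψ1 t :=
    gronwall_nonneg ψ1 α1 hψdiff h1 (fun t ht => hineq t ht)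
  have hhpos : ∀ t ≥ (0 : ℝ), 0 ≤ h t := by
    apply gronwall_nonneg h α0 hhdiff h0
    intro t ht
    have := hψpos t ht
    rw [hψ1] at this
    exact this
  intro t ht
  have := hhpos t ht
  rw [hh] at this
  have hnorm : Δ ^ 2 ≤ ‖po - p t‖ ^ 2 := by linarith
  have : ‖p t - po‖ = ‖po - p t‖ := norm_sub_rev _ _
  nlinarith [norm_nonneg (po - p t)]
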